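/- Let X be a countable set, n ≥ 1 an integer, and D_1, …, D_n probability distributions on X. Let Q be a probability distribution on X^n that is a multi-dimensional coupling of D_1,…,D_n: for every i ∈ [n] and x ∈ X, Q({w ∈ X^n : w_i = x}) = D_i(x). Let S ⊆ X be a coincident subset for Q: for every x ∈ S and every i ∈ [n], Q({w : w_i = x}) = Q({w : ∃ j ∈ [n], w_j = x}). Let γ = Q({w : ∃ i ∈ [n], w_i ∉ S}). Then for every randomized guessing rule, i.e. every function g : X → Δ([n]) assigning to each observation a probability vector over [n], the success probability of guessing a uniformly random index from one observation satisfies (1/n)·Σ_{i=1}^n Σ_{x∈X} D_i(x)·g(x)_i ≤ γ + (1−γ)/n. (Lemma 3.7, multi-dimensional coupling indistinguishability.) -/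

import Mathlib

/-- **Lemma 3.7** (multi-dimensional coupling indistinguishability).
Let `D 0, …, D (n−1)` be distributions on a countable set `X` and `Q` a distribution on
`X^n` (functions `Fin n → X`) which is a multi-dimensional coupling of the `D i`'s, with
coincident subset `S` and `γ = Q({w : ∃ i, w i ∉ S})`. Then for every randomized
guessing rule `g : X → Δ([n])`, the probability of correctly guessing a uniformly
random index from one observation, `(1/n)·Σ_i Σ_x D i x · g x i`, is at most
`γ + (1−γ)/n`. -/
theorem multi_coupling_indistinguishability {X : Type*} [Countable X]
    (n : ℕ) (hn : 1 ≤ n)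
    (D : Fin n → X → ℝ)
    (hD0 : ∀ i x, 0 ≤ D i x) (hDs : ∀ i, Summable (D i)) (hD1 : ∀ i, ∑' x, D i x = 1)
    (Q : (Fin n → X) → ℝ)
    (hQ0 : ∀ v, 0 ≤ Q v) (hQs : Summable Q) (hQ1 : ∑' v, Q v = 1)
    (hcoupling : ∀ (i : Fin n) (x : X),
      (∑' v : {v : Fin n → X | v i = x}, Q v) = D i x)
    (S : Set X)
    (hcoincident : ∀ x ∈ S, ∀ i : Fin n,
      (∑' v : {v : Fin n → X | v i = x}, Q v)
        = ∑' v : {v : Fin n → X | ∃ j : Fin n, v j = x}, Q v)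
    (γ : ℝ) (hγ : γ = ∑' v : {v : Fin n → X | ∃ i : Fin n, v i ∉ S}, Q v)
    (g : X → Fin n → ℝ)
    (hg0 : ∀ x i, 0 ≤ g x i) (hg1 : ∀ x, ∑ i, g x i = 1) :
    (1 / (n : ℝ)) * ∑ i, ∑' x, D i x * g x i ≤ γ + (1 - γ) / (n : ℝ) := by
  classical
  have i0 : Fin n := ⟨0, hn⟩
  -- Null fact: if x ∈ S appears in v but v is not constantly x, then Q v = 0.
  have hnull : ∀ x ∈ S, ∀ v : Fin n → X,
      (∃ j : Fin n, v j = x) → (∃ i : Fin n, v i ≠ x) → Q v = 0 := by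
    rintro x hx v hvE ⟨i, hi⟩
    have hco := hcoincident x hx i
    set B : Set (Fin n → X) := {v | v i = x} with hB
    set E : Set (Fin n → X) := {v | ∃ j : Fin n, v j = x} with hE
    have hBE : B ⊆ E := fun w hw => ⟨i, hw⟩
    have hdisj : Disjoint B (E \ B) := Set.disjoint_sdiff_right
    have hsplit := Summable.tsum_union_disjoint (f := Q) hdisj (hQs.subtype _) (hQs.subtype _)
    rw [Set.union_diff_cancel hBE] at hsplit
    have hzero : (∑' w : ↥(E \ B), Q ↑w) = 0 := by
      have : (∑' w : B, Q ↑w) = ∑' w : E, Q ↑w := hco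
      linarith [hsplit]
    have hmem : v ∈ E \ B := ⟨hvE, hi⟩
    have hle : Q v ≤ ∑' w : ↥(E \ B), Q ↑w :=
      Summable.le_tsum (hQs.subtype _) (⟨v, hmem⟩ : ↥(E \ B)) (fun w _ => hQ0 ↑w)
    exact le_antisymm (by rw [hzero] at hle; exact hle) (hQ0 v)
  -- On S, the "appears somewhere" mass equals the mass of the constant vector.
  have hpx : ∀ x ∈ S,
      (∑' v : {v : Fin n → X | ∃ j : Fin n, v j = x}, Q ↑v) = Q (fun _ => x) := by
    intro x hx
    have hmem : (fun _ : Fin n => x) ∈ {v : Fin n → X | ∃ j : Fin n, v j = x} := ⟨i0, rfl⟩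
    refine tsum_eq_single (⟨_, hmem⟩ : {v : Fin n → X | ∃ j : Fin n, v j = x}) ?_
    rintro ⟨v, hv⟩ hne
    have hvne : ∃ i : Fin n, v i ≠ x := by
      by_contra h
      push_neg at h
      exact hne (Subtype.ext (funext h))
    exact hnull x hx v hv hvne
  have hDS : ∀ (i : Fin n), ∀ x ∈ S, D i x = Q (fun _ => x) := by
    intro i x hx
    rw [← hcoupling i x, hcoincident x hx i, hpx x hx]
  -- The set A of vectors with all coordinates in S.
  set A : Set (Fin n → X) := {v | ∀ i : Fin n, v i ∈ S} with hA
  have hAc : {v : Fin n → X | ∃ i : Fin n, v i ∉ S} = Aᶜ := by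
    ext v; simp [hA, not_forall]
  have hγ' : γ = ∑' v : ↥Aᶜ, Q ↑v := by rw [hγ, hAc]
  have hAγ : (∑' v : A, Q ↑v) = 1 - γ := by
    have h := Summable.tsum_add_tsum_compl (f := Q) (s := A) (hQs.subtype _) (hQs.subtype _)
    rw [hQ1] at h
    rw [hγ']
    linarith
  -- Total constant mass over S equals 1 - γ.
  have hσ : (∑' x : S, Q (fun _ => (x : X))) = 1 - γ := by
    rw [← hAγ]
    have hmemA : ∀ x : S, (fun _ : Fin n => (x : X)) ∈ A := fun x _ => x.2
    have hinj : Function.Injective (fun x : S => (⟨fun _ => (x : X), hmemA x⟩ : A)) := by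
      intro a b h
      have := congrArg (fun w : A => (w : Fin n → X) i0) h
      exact Subtype.ext this
    have := hinj.tsum_eq (f := fun v : A => Q ↑v) ?_
    · exact this
    · intro w hw
      have hconst : ∀ i : Fin n, (w : Fin n → X) i = (w : Fin n → X) i0 := by
        by_contra h
        push_neg at h
        obtain ⟨i, hi⟩ := h
        exact hw (hnull ((w : Fin n → X) i0) (w.2 i0) w ⟨i0, rfl⟩ ⟨i, hi⟩)
      exact ⟨⟨(w : Fin n → X) i0, w.2 i0⟩, Subtype.ext (funext fun i => (hconst i).symm)⟩
  -- D i mass on S and off S.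
  have hDSsum : ∀ i : Fin n, (∑' x : S, D i ↑x) = 1 - γ := by
    intro i
    rw [← hσ]
    exact tsum_congr fun x => hDS i ↑x x.2
  have hDScomp : ∀ i : Fin n, (∑' x : ↥Sᶜ, D i ↑x) = γ := by
    intro i
    have h := Summable.tsum_add_tsum_compl (f := D i) (s := S) ((hDs i).subtype _) ((hDs i).subtype _)
    rw [hD1 i, hDSsum i] at h
    linarith
  -- g is at most 1.
  have hgle1 : ∀ x i, g x i ≤ 1 := by
    intro x i
    rw [← hg1 x]
    exact Finset.single_le_sum (fun j _ => hg0 x j) (Finset.mem_univ i)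
  -- Summability of the success terms.
  have hfs : ∀ i : Fin n, Summable (fun x => D i x * g x i) := by
    intro i
    refine Summable.of_nonneg_of_le (fun x => mul_nonneg (hD0 i x) (hg0 x i))
      (fun x => ?_) (hDs i)
    exact mul_le_of_le_one_right (hD0 i x) (hgle1 x i)
  -- Split each success term over S and its complement.
  have hsplit_i : ∀ i : Fin n, (∑' x, D i x * g x i)
      = (∑' x : S, D i ↑x * g ↑x i) + ∑' x : ↥Sᶜ, D i ↑x * g ↑x i := by
    intro i
    exact (Summable.tsum_add_tsum_compl (f := fun x => D i x * g x i) (s := S)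
      ((hfs i).subtype _) ((hfs i).subtype _)).symm
  have hSc_le : ∀ i : Fin n, (∑' x : ↥Sᶜ, D i ↑x * g ↑x i) ≤ γ := by
    intro i
    calc (∑' x : ↥Sᶜ, D i ↑x * g ↑x i) ≤ ∑' x : ↥Sᶜ, D i ↑x :=
          Summable.tsum_le_tsum (fun x => mul_le_of_le_one_right (hD0 i ↑x) (hgle1 ↑x i))
            ((hfs i).subtype _) ((hDs i).subtype _)
      _ = γ := hDScomp i
  have hS_eq : ∀ i : Fin n,
      (∑' x : S, D i ↑x * g ↑x i) = ∑' x : S, Q (fun _ => (x : X)) * g ↑x i := by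
    intro i
    exact tsum_congr fun x => by rw [hDS i ↑x x.2]
  have hSsummable : ∀ i : Fin n, Summable (fun x : S => Q (fun _ => (x : X)) * g ↑x i) := by
    intro i
    have : (fun x : S => Q (fun _ => (x : X)) * g ↑x i)
        = fun x : S => D i ↑x * g ↑x i := funext fun x => by rw [hDS i ↑x x.2]
    rw [this]
    exact ((hfs i).subtype _)
  -- Sum the S-parts over i.
  have hSsum : (∑ i : Fin n, ∑' x : S, Q (fun _ => (x : X)) * g ↑x i) = 1 - γ := by
    rw [← Summable.tsum_finsetSum (fun i _ => hSsummable i)]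
    rw [← hσ]
    refine tsum_congr fun x => ?_
    rw [← Finset.mul_sum, hg1 ↑x, mul_one]
  -- Put it together.
  have hmain : (∑ i : Fin n, ∑' x, D i x * g x i) ≤ (1 - γ) + n * γ := by
    calc (∑ i : Fin n, ∑' x, D i x * g x i)
        = ∑ i : Fin n, ((∑' x : S, Q (fun _ => (x : X)) * g ↑x i)
            + ∑' x : ↥Sᶜ, D i ↑x * g ↑x i) := by
          refine Finset.sum_congr rfl fun i _ => ?_
          rw [hsplit_i i, hS_eq i]
      _ = (∑ i : Fin n, ∑' x : S, Q (fun _ => (x : X)) * g ↑x i)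
            + ∑ i : Fin n, ∑' x : ↥Sᶜ, D i ↑x * g ↑x i := Finset.sum_add_distrib
      _ ≤ (1 - γ) + n * γ := by
          rw [hSsum]
          have : (∑ i : Fin n, ∑' x : ↥Sᶜ, D i ↑x * g ↑x i) ≤ ∑ i : Fin n, γ :=
            Finset.sum_le_sum fun i _ => hSc_le i
          simp only [Finset.sum_const, Finset.card_univ, Fintype.card_fin, nsmul_eq_mul] at this
          linarith
  have hnpos : (0 : ℝ) < n := by exact_mod_cast Nat.lt_of_lt_of_le Nat.zero_lt_one hn
  have hfinal : (1 / (n : ℝ)) * ((1 - γ) + n * γ) = γ + (1 - γ) / (n : ℝ) := by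
    field_simp
    ring
  calc (1 / (n : ℝ)) * ∑ i, ∑' x, D i x * g x i
      ≤ (1 / (n : ℝ)) * ((1 - γ) + n * γ) := by
        apply mul_le_mul_of_nonneg_left hmain
        positivity
    _ = γ + (1 - γ) / (n : ℝ) := hfinal
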